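/- Let T(y) = p y'' + q y' + r y, let φ be a function with rational logarithmic derivative w = φ'/φ satisfying T(φ) = λ₀φ, let b be a nonzero rational function, and define A(y) = b(y' − w y), B(y) = (p/b)(y' − ŵ y) with ŵ = −w − q/p + b'/b. Then T = B∘A + λ₀, and the partner operator T̂ = A∘B + λ₀ has second-order coefficient p and first-order coefficient q̂ = q + p' − 2p b'/b; moreover T̂∘A = A∘T. -/

import Mathlib

/-- First-order operator `A(y) = b(y' − w y)`. -/
noncomputable def Aop (b w y : ℝ → ℝ) : ℝ → ℝ :=
  fun t => b t * (deriv y t - w t * y t)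

/-- First-order operator `B(y) = (p/b)(y' − ŵ y)`. -/
noncomputable def Bop (p b wh y : ℝ → ℝ) : ℝ → ℝ :=
  fun t => (p t / b t) * (deriv y t - wh t * y t)

/-- Second-order operator `T(y) = p y'' + q y' + r y`. -/
noncomputable def Dop (p q r y : ℝ → ℝ) : ℝ → ℝ :=
  fun t => p t * deriv (deriv y) t + q t * deriv y t + r t * y t

/-- Rational factorization: with `w = φ'/φ`, `T(φ) = λ₀φ`, and
`ŵ = −w − q/p + b'/b`, one has `T = B∘A + λ₀`; the partner `T̂ = A∘B + λ₀` is a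
second-order operator with leading coefficient `p` and first-order coefficient
`q̂ = q + p' − 2p b'/b`; moreover `T̂∘A = A∘T`. -/
theorem stmt12 (s : Set ℝ) (hs : IsOpen s)
    (p q r b w wh φ : ℝ → ℝ) (l0 : ℝ)
    (hpd : ∀ x ∈ s, DifferentiableAt ℝ p x)
    (hqd : ∀ x ∈ s, DifferentiableAt ℝ q x)
    (hrd : ∀ x ∈ s, DifferentiableAt ℝ r x)
    (hbd : ∀ x ∈ s, DifferentiableAt ℝ b x)
    (hwd : ∀ x ∈ s, DifferentiableAt ℝ w x)
    (hwhd : ∀ x ∈ s, DifferentiableAt ℝ wh x)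
    (hp0 : ∀ x ∈ s, p x ≠ 0) (hb0 : ∀ x ∈ s, b x ≠ 0)
    (hphi0 : ∀ x ∈ s, φ x ≠ 0)
    (hphid : ∀ x ∈ s, DifferentiableAt ℝ φ x)
    (hphid2 : ∀ x ∈ s, DifferentiableAt ℝ (deriv φ) x)
    (hw : ∀ x ∈ s, deriv φ x = w x * φ x)
    (hTphi : ∀ x ∈ s, Dop p q r φ x = l0 * φ x)
    (hwh : ∀ x ∈ s, wh x = -w x - q x / p x + deriv b x / b x) :
    (∀ y : ℝ → ℝ, (∀ x ∈ s, DifferentiableAt ℝ y x) →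
      (∀ x ∈ s, DifferentiableAt ℝ (deriv y) x) →
      ∀ x ∈ s, Bop p b wh (Aop b w y) x + l0 * y x = Dop p q r y x) ∧
    (∃ rh : ℝ → ℝ, ∀ y : ℝ → ℝ, (∀ x ∈ s, DifferentiableAt ℝ y x) →
      (∀ x ∈ s, DifferentiableAt ℝ (deriv y) x) →
      ∀ x ∈ s, Aop b w (Bop p b wh y) x + l0 * y x =
        p x * deriv (deriv y) x +
          (q x + deriv p x - 2 * p x * deriv b x / b x) * deriv y x + rh x * y x) ∧
    (∀ y : ℝ → ℝ, (∀ x ∈ s, DifferentiableAt ℝ y x) →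
      (∀ x ∈ s, DifferentiableAt ℝ (deriv y) x) →
      (∀ x ∈ s, DifferentiableAt ℝ (deriv (deriv y)) x) →
      ∀ x ∈ s, Aop b w (Bop p b wh (Aop b w y)) x + l0 * Aop b w y x =
        Aop b w (Dop p q r y) x) := by

  -- key relation: p w' + p w^2 + q w + r = l0 on s
  have hrel : ∀ x ∈ s, r x = l0 - p x * deriv w x - p x * w x * w x - q x * w x := by
    intro x hx
    have hev : deriv φ =ᶠ[nhds x] fun t => w t * φ t :=
      Filter.eventuallyEq_of_mem (hs.mem_nhds hx) (fun t ht => hw t ht)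
    have h2 : deriv (deriv φ) x = deriv w x * φ x + w x * deriv φ x := by
      rw [hev.deriv_eq, deriv_fun_mul (hwd x hx) (hphid x hx)]
    have h := hTphi x hx
    simp only [Dop] at h
    rw [h2, hw x hx] at h
    have h3 : (r x) * φ x = (l0 - p x * deriv w x - p x * w x * w x - q x * w x) * φ x := by
      ring_nf
      ring_nf at h
      linarith
    exact mul_right_cancel₀ (hphi0 x hx) h3
  have key : ∀ y : ℝ → ℝ, (∀ x ∈ s, DifferentiableAt ℝ y x) →
      (∀ x ∈ s, DifferentiableAt ℝ (deriv y) x) →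
      ∀ x ∈ s, Bop p b wh (Aop b w y) x + l0 * y x = Dop p q r y x := by
    intro y hy1 hy2 x hx
    have hAy : deriv (Aop b w y) x =
        deriv b x * (deriv y x - w x * y x) +
          b x * (deriv (deriv y) x - (deriv w x * y x + w x * deriv y x)) := by
      unfold Aop
      rw [deriv_fun_mul (hbd x hx) ((hy2 x hx).fun_sub ((hwd x hx).fun_mul (hy1 x hx))),
        deriv_fun_sub (hy2 x hx) ((hwd x hx).fun_mul (hy1 x hx)), deriv_fun_mul (hwd x hx) (hy1 x hx)]
    simp only [Bop, Dop, Aop]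
    rw [hAy, hrel x hx, hwh x hx]
    field_simp [hb0 x hx, hp0 x hx]
    ring
  refine ⟨key, ⟨fun t => l0 - (deriv p t - p t * deriv b t / b t) * wh t
      - p t * deriv wh t + p t * w t * wh t, ?_⟩, ?_⟩
  · intro y hy1 hy2 x hx
    have hBy : deriv (Bop p b wh y) x =
        (deriv p x * b x - p x * deriv b x) / b x ^ 2 * (deriv y x - wh x * y x) +
          p x / b x * (deriv (deriv y) x - (deriv wh x * y x + wh x * deriv y x)) := by
      unfold Bop
      rw [deriv_fun_mul ((hpd x hx).fun_div (hbd x hx) (hb0 x hx))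
          ((hy2 x hx).fun_sub ((hwhd x hx).fun_mul (hy1 x hx))),
        deriv_fun_sub (hy2 x hx) ((hwhd x hx).fun_mul (hy1 x hx)),
        deriv_fun_mul (hwhd x hx) (hy1 x hx), deriv_fun_div (hpd x hx) (hbd x hx) (hb0 x hx)]
    simp only [Aop, Bop]
    rw [hBy, hwh x hx]
    have hb := hb0 x hx
    have hp := hp0 x hx
    field_simp
    ring
  · intro y hy1 hy2 hy3 x hx
    have hF : DifferentiableAt ℝ (Dop p q r y) x := by
      unfold Dop
      exact (((hpd x hx).mul (hy3 x hx)).add ((hqd x hx).mul (hy2 x hx))).add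
        ((hrd x hx).mul (hy1 x hx))
    have hev : Bop p b wh (Aop b w y) =ᶠ[nhds x] fun t => Dop p q r y t - l0 * y t :=
      Filter.eventuallyEq_of_mem (hs.mem_nhds hx) (fun t ht => by
        have := key y hy1 hy2 t ht
        show Bop p b wh (Aop b w y) t = Dop p q r y t - l0 * y t
        linarith)
    have hdBA : deriv (Bop p b wh (Aop b w y)) x = deriv (Dop p q r y) x - l0 * deriv y x := by
      rw [hev.deriv_eq, deriv_fun_sub hF (by exact (hy1 x hx).const_mul l0),
        deriv_const_mul l0 (hy1 x hx)]
    have hBAx : Bop p b wh (Aop b w y) x = Dop p q r y x - l0 * y x := by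
      have := key y hy1 hy2 x hx; linarith
    rw [show Aop b w (Bop p b wh (Aop b w y)) x =
        b x * (deriv (Bop p b wh (Aop b w y)) x - w x * Bop p b wh (Aop b w y) x) from rfl,
      show Aop b w y x = b x * (deriv y x - w x * y x) from rfl,
      show Aop b w (Dop p q r y) x =
        b x * (deriv (Dop p q r y) x - w x * Dop p q r y x) from rfl,
      hdBA, hBAx]
    ring
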